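/- For every polynomial f ∈ Poly⁺ (zero constant term), the finitely supported sum Σ_{i≥1} B_i(D_i f) equals f; that is, the slide creators B_i are creation operators for the slide extractors D_i. -/
import Mathlib


/-
Conventions: `Pol = MvPolynomial ℕ ℤ` with the Lean variable `X i` representing
the paper's variable `x_{i+1}` (0-indexed).  All operators carrying a paper index
`i ≥ 1` are represented by Lean operators indexed by `i : ℕ` (Lean `i` ↔ paper `i+1`),
and sequences of positive integers are represented by sequences of natural numbers
(entry `v` ↔ paper entry `v+1`).
-/

open MvPolynomial
open scoped Classical

abbrev Pol := MvPolynomial ℕ ℤ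

noncomputable section

/-- Interchange the variables `x_{i+1}` and `x_{i+2}` (paper indexing). -/
def swapVar (i : ℕ) (f : Pol) : Pol := rename (Equiv.swap i (i+1)) f

/-- Exact division: the unique `g` with `d * g = f` when it exists (`0` otherwise). -/
def exactDiv (d f : Pol) : Pol := if h : ∃ g : Pol, d * g = f then h.choose else 0

/-- The divided difference operator `∂_{i+1}` (paper indexing). -/
def ddiff (i : ℕ) (f : Pol) : Pol := exactDiv (X i - X (i+1)) (f - swapVar i f)

/-- The Bergeron–Sottile operator `R_{i+1}` (paper indexing): `x_j ↦ x_j` for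
`j < i+1`, `x_{i+1} ↦ 0`, `x_j ↦ x_{j-1}` for `j > i+1`. -/
def BS (i : ℕ) : Pol →ₐ[ℤ] Pol :=
  aeval fun j => if j < i then X j else if j = i then 0 else X (j-1)

/-- `m`-fold iterate of `BS i`. -/
def BSit (i m : ℕ) (f : Pol) : Pol := (fun g => BS i g)^[m] f

/-- `Z g = Σ_{k ≥ 0} R₁ᵏ g`. -/
def Zop (f : Pol) : Pol := ∑ᶠ k : ℕ, BSit 0 k f

/-- `Z^{(m)} g = Σ_{k ≥ 0} R₁^{km} g`. -/
def Zm (m : ℕ) (f : Pol) : Pol := ∑ᶠ k : ℕ, BSit 0 (k * m) f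

/-- The truncation operator keeping the first `n` variables: `Π_n` in paper indexing. -/
def truncOp (n : ℕ) : Pol →ₐ[ℤ] Pol := aeval fun j => if j < n then X j else 0

/-- The quasisymmetric divided difference `T_{i+1}` defined as the exact quotient
`((R_{i+2} - R_{i+1})f)/x_{i+1}` (paper indexing). -/
def TqDiv (i : ℕ) (f : Pol) : Pol := exactDiv (X i) (BS (i+1) f - BS i f)

/-- The quasisymmetric divided difference `T_{i+1} = R_{i+1} ∘ ∂_{i+1}` (paper indexing). -/
def Tq (i : ℕ) (f : Pol) : Pol := BS i (ddiff i f)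

/-- The `m`-quasisymmetric divided difference `T^{(m)}_{i+1}` (paper indexing). -/
def Tm (m i : ℕ) (f : Pol) : Pol := exactDiv (X i) (BSit (i+1) m f - BSit i m f)

/-- The slide extractor `D_{i+1} = Π_{i+1} ∘ ∂_{i+1}` (paper indexing). -/
def Dop (i : ℕ) (f : Pol) : Pol := truncOp (i+1) (ddiff i f)

/-- The `m`-slide extractor `D^{(m)}_{i+1} = Π_{i+1} ∘ T^{(m)}_{i+1}` (paper indexing). -/
def Dm (m i : ℕ) (f : Pol) : Pol := truncOp (i+1) (Tm m i f)

/-- The slide creator `B_{i+1} f = Σ_{k=1}^{i+1} x_k · R_k^{i+1-k}(Π_{i+1} f)` (paper indexing). -/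
def Bop (i : ℕ) (f : Pol) : Pol :=
  ∑ k ∈ Finset.range (i+1), X k * BSit k (i - k) (truncOp (i+1) f)

/-- The creation operator `Z ∘ x_{i+1} ∘ R_{i+1}` (paper indexing). -/
def crea (i : ℕ) (f : Pol) : Pol := Zop (X i * BS i f)

/-- A permutation of `{0,1,2,…}` is finitely supported if it fixes all but
finitely many points. -/
def FinSupp (w : Equiv.Perm ℕ) : Prop := Set.Finite {x | w x ≠ x}

/-- Coxeter length: the minimal `k` such that `w` is a product of `k` simple
transpositions. -/
def len (w : Equiv.Perm ℕ) : ℕ :=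
  sInf {k | ∃ l : List ℕ, l.length = k ∧ (l.map fun i => Equiv.swap i (i+1)).prod = w}

/-- The set of reduced words for `w`. -/
def Red (w : Equiv.Perm ℕ) : Set (List ℕ) :=
  {l | l.length = len w ∧ (l.map fun i => Equiv.swap i (i+1)).prod = w}

/-- A family of polynomials indexed by permutations is a family of Schubert
polynomials if: each member is homogeneous of degree the length, the identity is
sent to `1`, and divided differences act as expected (all this for finitely
supported permutations). -/
def IsSchubertFamily (S : Equiv.Perm ℕ → Pol) : Prop :=
  (∀ w, FinSupp w → (S w).IsHomogeneous (len w)) ∧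
  S 1 = 1 ∧
  ∀ w, FinSupp w → ∀ i : ℕ,
    ddiff i (S w) = if w (i+1) < w i then S (w * Equiv.swap i (i+1)) else 0

/-- `b` is a compatible sequence for `a`. -/
def Compat {k : ℕ} (a b : Fin k → ℕ) : Prop :=
  Monotone b ∧ (∀ j, b j ≤ a j) ∧
  ∀ (j : ℕ) (h : j + 1 < k),
    a ⟨j, Nat.lt_of_succ_lt h⟩ < a ⟨j+1, h⟩ → b ⟨j, Nat.lt_of_succ_lt h⟩ < b ⟨j+1, h⟩

/-- The slide polynomial `𝔉_a`, as the sum of the monomials of all compatible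
sequences for `a`. -/
def slide {k : ℕ} (a : Fin k → ℕ) : Pol :=
  ∑ᶠ b ∈ {b : Fin k → ℕ | Compat a b}, ∏ j, X (b j)

/-- `b` is an `m`-compatible sequence for `a` (entrywise congruent mod `m`). -/
def MCompat (m : ℕ) {k : ℕ} (a b : Fin k → ℕ) : Prop :=
  Monotone b ∧ (∀ j, b j ≤ a j ∧ b j % m = a j % m) ∧
  ∀ (j : ℕ) (h : j + 1 < k),
    a ⟨j, Nat.lt_of_succ_lt h⟩ < a ⟨j+1, h⟩ → b ⟨j, Nat.lt_of_succ_lt h⟩ < b ⟨j+1, h⟩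

/-- The `m`-slide polynomial `𝔉ᵐ_a`. -/
def mslide (m : ℕ) {k : ℕ} (a : Fin k → ℕ) : Pol :=
  ∑ᶠ b ∈ {b : Fin k → ℕ | MCompat m a b}, ∏ j, X (b j)

/-- Value of the `m`-slide creator `B^{(m)}_{a+1}` (paper indexing) on the monomial with
exponent vector `d`. -/
def BmMono (m a : ℕ) (d : ℕ →₀ ℕ) : Pol :=
  if ∃ t, a < t ∧ d t ≠ 0 then 0
  else monomial (d.erase a) 1 *
    ∑ r ∈ Finset.range (a+1),
      if r * m ≤ a ∧ ∀ t, t < a → d t ≠ 0 → t < a - r * m then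
        X (a - r * m) ^ (d a + 1) else 0

/-- The `m`-slide creator `B^{(m)}_{a+1}` (paper indexing), extended linearly from
its values on monomials. -/
def Bm (m a : ℕ) (f : Pol) : Pol := ∑ d ∈ f.support, C (f.coeff d) * BmMono m a d

end

noncomputable section StmtTen

open Finset

/-- geometric-sum helper -/
def gsum (x y : Pol) (D : ℕ) : Pol := ∑ j ∈ Finset.range D, x ^ j * y ^ (D - 1 - j)

lemma gsum_mul (x y : Pol) (D : ℕ) : (x - y) * gsum x y D = x ^ D - y ^ D := by
  induction D with
  | zero => simp [gsum]
  | succ D ih =>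
    have h : gsum x y (D + 1) = x ^ D + y * gsum x y D := by
      rw [gsum, Finset.sum_range_succ]
      simp only [Nat.add_sub_cancel, Nat.sub_self, pow_zero, mul_one]
      rw [gsum, Finset.mul_sum, add_comm]
      congr 1
      apply Finset.sum_congr rfl
      intro j hj
      simp only [Finset.mem_range] at hj
      have : D - j = (D - 1 - j) + 1 := by omega
      rw [this, pow_succ]
      ring
    rw [h, mul_add, show (x-y)*(y*gsum x y D) = y*((x-y)*gsum x y D) by ring, ih]
    ring

lemma gsum_zero_right (x : Pol) (D : ℕ) :
    gsum x 0 D = if D = 0 then 0 else x ^ (D - 1) := by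
  rcases Nat.eq_zero_or_pos D with h | h
  · simp [gsum, h]
  · rw [if_neg (by omega), gsum]
    rw [Finset.sum_eq_single (D - 1)]
    · simp
    · intro j hj hne
      simp only [Finset.mem_range] at hj
      rw [zero_pow (by omega), mul_zero]
    · intro h'; exact absurd (Finset.mem_range.mpr (by omega)) h'

lemma X_sub_X_ne (i : ℕ) : (X i - X (i+1) : Pol) ≠ 0 := by
  refine sub_ne_zero.mpr ?_
  intro h
  exact (Nat.succ_ne_self i).symm (MvPolynomial.X_injective h)

lemma ddiff_eq {i : ℕ} {f g : Pol} (h : (X i - X (i+1)) * g = f - swapVar i f) :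
    ddiff i f = g := by
  rw [ddiff, exactDiv, dif_pos ⟨g, h⟩]
  have h2 := (⟨g, h⟩ : ∃ g : Pol, (X i - X (i+1)) * g = f - swapVar i f).choose_spec
  exact mul_left_cancel₀ (X_sub_X_ne i) (h2.trans h.symm)

lemma mono_eq_prod {d : ℕ →₀ ℕ} {B : ℕ} (h : ∀ j, d j ≠ 0 → j < B) :
    (monomial d (1:ℤ) : Pol) = ∏ j ∈ Finset.range B, X j ^ d j := by
  rw [MvPolynomial.monomial_eq, map_one, one_mul]
  rw [Finsupp.prod_of_support_subset d
    (fun j hj => Finset.mem_range.mpr (h j (Finsupp.mem_support_iff.mp hj)))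
    (fun j e => (X j : Pol) ^ e) (fun j _ => pow_zero _)]

lemma swap_prod (i B : ℕ) (hB : i + 1 < B) (e : ℕ → ℕ) :
    swapVar i (∏ j ∈ Finset.range B, X j ^ e j) =
      ∏ j ∈ Finset.range B, X j ^ e (Equiv.swap i (i+1) j) := by
  rw [swapVar, map_prod]
  simp only [map_pow, rename_X]
  refine Finset.prod_nbij' (fun j => Equiv.swap i (i+1) j) (fun j => Equiv.swap i (i+1) j)
    ?_ ?_ ?_ ?_ ?_
  · intro j hj
    simp only [Finset.mem_range] at *
    rcases Equiv.swap_apply_def i (i+1) j with _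
    by_cases h1 : j = i
    · simp [h1, Equiv.swap_apply_left]; omega
    by_cases h2 : j = i + 1
    · simp [h2, Equiv.swap_apply_right]; omega
    · rw [Equiv.swap_apply_of_ne_of_ne h1 h2]; exact hj
  · intro j hj
    simp only [Finset.mem_range] at *
    by_cases h1 : j = i
    · simp [h1, Equiv.swap_apply_left]; omega
    by_cases h2 : j = i + 1
    · simp [h2, Equiv.swap_apply_right]; omega
    · rw [Equiv.swap_apply_of_ne_of_ne h1 h2]; exact hj
  · intro j _; simp
  · intro j _; simp
  · intro j _
    rw [Equiv.swap_apply_self]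


/-- split off factors at i and i+1 -/
lemma prod_split (i B : ℕ) (hB : i + 1 < B) (e : ℕ → ℕ) :
    (∏ j ∈ Finset.range B, (X j : Pol) ^ e j) =
      X i ^ e i * X (i+1) ^ e (i+1) *
        ∏ j ∈ ((Finset.range B).erase i).erase (i+1), X j ^ e j := by
  have h1 : (i:ℕ) ∈ Finset.range B := Finset.mem_range.mpr (by omega)
  have h2 : (i+1) ∈ (Finset.range B).erase i :=
    Finset.mem_erase.mpr ⟨by omega, Finset.mem_range.mpr hB⟩
  rw [← Finset.mul_prod_erase _ _ h1, ← Finset.mul_prod_erase _ _ h2]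
  ring

/-- the big bound for a finsupp -/
def BB (i : ℕ) (d : ℕ →₀ ℕ) : ℕ := max (i + 2) (d.support.sup id + 1)

lemma lt_BB {i : ℕ} {d : ℕ →₀ ℕ} {j : ℕ} (h : d j ≠ 0) : j < BB i d := by
  have : j ≤ d.support.sup id := Finset.le_sup (f := id) (Finsupp.mem_support_iff.mpr h)
  simp only [BB]; omega

/-- rest-of-monomial product -/
def PP (i : ℕ) (d : ℕ →₀ ℕ) : Pol :=
  ∏ j ∈ ((Finset.range (BB i d)).erase i).erase (i+1), X j ^ d j

def sgn (i : ℕ) (d : ℕ →₀ ℕ) : Pol := if d (i+1) ≤ d i then 1 else -1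

def mD (i : ℕ) (d : ℕ →₀ ℕ) : ℕ := min (d i) (d (i+1))

def DD (i : ℕ) (d : ℕ →₀ ℕ) : ℕ := max (d i) (d (i+1)) - mD i d

/-- explicit witness for the divided difference of a monomial -/
def ddW (i : ℕ) (d : ℕ →₀ ℕ) : Pol :=
  sgn i d * PP i d * X i ^ mD i d * X (i+1) ^ mD i d * gsum (X i) (X (i+1)) (DD i d)

lemma hBB1 (i : ℕ) (d : ℕ →₀ ℕ) : i + 1 < BB i d := by simp only [BB]; omega

lemma mono_as_PP (i : ℕ) (d : ℕ →₀ ℕ) :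
    (monomial d (1:ℤ) : Pol) = X i ^ d i * X (i+1) ^ d (i+1) * PP i d := by
  rw [mono_eq_prod (B := BB i d) (fun j hj => lt_BB hj), prod_split i _ (hBB1 i d), PP]

lemma swap_mono_as_PP (i : ℕ) (d : ℕ →₀ ℕ) :
    swapVar i (monomial d (1:ℤ)) = X i ^ d (i+1) * X (i+1) ^ d i * PP i d := by
  rw [mono_eq_prod (B := BB i d) (fun j hj => lt_BB hj), swap_prod i _ (hBB1 i d),
    prod_split i _ (hBB1 i d), PP]
  rw [Equiv.swap_apply_left, Equiv.swap_apply_right]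
  congr 1
  refine Finset.prod_congr rfl (fun j hj => ?_)
  simp only [Finset.mem_erase] at hj
  rw [Equiv.swap_apply_of_ne_of_ne hj.2.1 hj.1]

lemma hW (i : ℕ) (d : ℕ →₀ ℕ) :
    (X i - X (i+1)) * ddW i d
      = monomial d (1:ℤ) - swapVar i (monomial d (1:ℤ)) := by
  rw [ddW, swap_mono_as_PP i d, mono_as_PP i d]
  have key : (X i - X (i+1)) * (sgn i d * PP i d * X i ^ mD i d * X (i+1) ^ mD i d *
      gsum (X i) (X (i+1)) (DD i d))
      = sgn i d * PP i d * X i ^ mD i d * X (i+1) ^ mD i d *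
        ((X i - X (i+1)) * gsum (X i) (X (i+1)) (DD i d)) := by ring
  rw [key, gsum_mul]
  rcases le_or_gt (d (i+1)) (d i) with h | h
  · have hs : sgn i d = 1 := if_pos h
    have hm : mD i d = d (i+1) := min_eq_right h
    have hD : DD i d + mD i d = d i := by simp only [DD, mD] at *; omega
    rw [hs, one_mul, ← hD, hm, pow_add, pow_add]
    ring
  · have hs : sgn i d = -1 := if_neg (by omega)
    have hm : mD i d = d i := min_eq_left (le_of_lt h)
    have hD : DD i d + mD i d = d (i+1) := by simp only [DD, mD] at *; omega
    rw [hs, ← hD, hm, pow_add, pow_add]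
    ring


lemma ddiff_apply (i : ℕ) (f : Pol) :
    ddiff i f = ∑ d ∈ f.support, C (f.coeff d) * ddW i d := by
  apply ddiff_eq
  rw [Finset.mul_sum]
  have hf : f = ∑ d ∈ f.support, C (f.coeff d) * monomial d 1 := by
    conv_lhs => rw [(f.support_sum_monomial_coeff).symm]
    refine Finset.sum_congr rfl (fun d _ => ?_)
    rw [C_mul_monomial, mul_one]
  conv_rhs => rw [hf]
  rw [swapVar, map_sum, ← Finset.sum_sub_distrib]
  refine Finset.sum_congr rfl (fun d _ => ?_)
  rw [show (X i - X (i+1)) * (C (f.coeff d) * ddW i d)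
      = C (f.coeff d) * ((X i - X (i+1)) * ddW i d) by ring, hW i d]
  rw [map_mul, rename_C]
  rw [mul_sub]
  rfl

/-- per-monomial slide extractor value -/
def DW (i : ℕ) (d : ℕ →₀ ℕ) : Pol := truncOp (i+1) (ddW i d)

lemma Dop_apply (i : ℕ) (f : Pol) :
    Dop i f = ∑ d ∈ f.support, C (f.coeff d) * DW i d := by
  rw [Dop, ddiff_apply, map_sum]
  refine Finset.sum_congr rfl (fun d _ => ?_)
  rw [map_mul, DW]
  congr 1
  rw [show (C (f.coeff d) : Pol) = algebraMap ℤ Pol (f.coeff d) from rfl]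
  rw [AlgHom.commutes]

/-- substitution describing `BSit k m` -/
def bsub (k m : ℕ) : ℕ → Pol := fun j =>
  if j < k then X j else if j < k + m then 0 else X (j - m)

lemma BSit_aeval (k m : ℕ) (f : Pol) : BSit k m f = aeval (bsub k m) f := by
  induction m generalizing f with
  | zero =>
    have : bsub k 0 = X := by
      funext j; simp only [bsub, Nat.add_zero, Nat.sub_zero]
      by_cases h : j < k <;> simp [h]
    rw [BSit, Function.iterate_zero, id_eq, this, aeval_X_left, AlgHom.id_apply]
  | succ m ih =>
    rw [BSit, Function.iterate_succ_apply', ← BSit, ih]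
    rw [show (BS k) (aeval (bsub k m) f) = (BS k).comp (aeval (bsub k m)) f from rfl,
      comp_aeval]
    have hfun : (fun j => (BS k) (bsub k m j)) = bsub k (m+1) := by
      funext j
      by_cases h1 : j < k
      · have l : bsub k m j = X j := if_pos h1
        have r : bsub k (m+1) j = X j := if_pos h1
        rw [l, r]
        simp only [BS, aeval_X]
        exact if_pos h1
      · by_cases h2 : j < k + m
        · have l : bsub k m j = 0 := by rw [bsub]; rw [if_neg h1, if_pos h2]
          have r : bsub k (m+1) j = 0 := by rw [bsub]; rw [if_neg h1, if_pos (by omega)]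
          rw [l, r, map_zero]
        · have l : bsub k m j = X (j - m) := by rw [bsub]; rw [if_neg h1, if_neg h2]
          rw [l]
          simp only [BS, aeval_X]
          by_cases h3 : j = k + m
          · rw [if_neg (by omega), if_pos (by omega)]
            rw [bsub]; rw [if_neg h1, if_pos (by omega)]
          · rw [if_neg (by omega), if_neg (by omega)]
            rw [bsub]; rw [if_neg h1, if_neg (by omega)]
            congr 1
    rw [hfun]

lemma Bop_eq (i : ℕ) (f : Pol) :
    Bop i f = ∑ k ∈ Finset.range (i+1),
      X k * aeval (bsub k (i-k)) (truncOp (i+1) f) := by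
  rw [Bop]
  exact Finset.sum_congr rfl (fun k _ => by rw [BSit_aeval])

lemma Bop_zero (i : ℕ) : Bop i 0 = 0 := by
  rw [Bop_eq]
  refine Finset.sum_eq_zero (fun k _ => ?_)
  rw [map_zero, map_zero, mul_zero]

lemma Bop_Csum {α : Type*} (i : ℕ) (s : Finset α) (c : α → ℤ) (h : α → Pol) :
    Bop i (∑ d ∈ s, C (c d) * h d) = ∑ d ∈ s, C (c d) * Bop i (h d) := by
  simp only [Bop_eq, map_sum, map_mul, Finset.mul_sum]
  rw [Finset.sum_comm]
  refine Finset.sum_congr rfl (fun d _ => ?_)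
  refine Finset.sum_congr rfl (fun k _ => ?_)
  have hc : ∀ (g : Pol →ₐ[ℤ] Pol), g (C (c d)) = C (c d) := fun g => by
    rw [show (C (c d) : Pol) = algebraMap ℤ Pol (c d) from rfl, AlgHom.commutes]
  rw [hc, hc]
  ring


lemma trunc_X (m j : ℕ) : truncOp m (X j : Pol) = if j < m then X j else 0 := by
  rw [truncOp, aeval_X]

lemma map_gsum (phi : Pol →ₐ[ℤ] Pol) (x y : Pol) (D : ℕ) :
    phi (gsum x y D) = gsum (phi x) (phi y) D := by
  rw [gsum, map_sum, gsum]
  exact Finset.sum_congr rfl (fun j _ => by rw [map_mul, map_pow, map_pow])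

lemma map_sgn (phi : Pol →ₐ[ℤ] Pol) (i : ℕ) (d : ℕ →₀ ℕ) : phi (sgn i d) = sgn i d := by
  rw [sgn]
  split
  · exact map_one phi
  · rw [map_neg, map_one]

lemma DW_expand (i : ℕ) (d : ℕ →₀ ℕ) :
    DW i d = sgn i d * truncOp (i+1) (PP i d) * X i ^ mD i d * (0:Pol) ^ mD i d *
      gsum (X i) 0 (DD i d) := by
  rw [DW, ddW, map_mul, map_mul, map_mul, map_mul, map_pow, map_pow, map_gsum, map_sgn,
    trunc_X, trunc_X, if_pos (by omega : i < i+1), if_neg (by omega : ¬ i+1 < i+1)]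

lemma DW_diag {i : ℕ} {d : ℕ →₀ ℕ} (h : d i = d (i+1)) : DW i d = 0 := by
  have hD : DD i d = 0 := by simp only [DD, mD]; omega
  rw [DW_expand, hD]
  simp [gsum]

lemma DW_min {i : ℕ} {d : ℕ →₀ ℕ} (h1 : d i ≠ 0) (h2 : d (i+1) ≠ 0) : DW i d = 0 := by
  have hm : mD i d ≠ 0 := by simp only [mD]; omega
  rw [DW_expand, zero_pow hm]
  ring

lemma trunc_PP_zero {i : ℕ} {d : ℕ →₀ ℕ} {j : ℕ} (hj1 : i + 1 < j) (hj2 : d j ≠ 0) :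
    truncOp (i+1) (PP i d) = 0 := by
  rw [PP, map_prod]
  refine Finset.prod_eq_zero (i := j) ?_ ?_
  · exact Finset.mem_erase.mpr ⟨by omega, Finset.mem_erase.mpr ⟨by omega,
      Finset.mem_range.mpr (lt_BB hj2)⟩⟩
  · rw [map_pow, trunc_X, if_neg (by omega), zero_pow hj2]

lemma DW_mid {i : ℕ} {d : ℕ →₀ ℕ} {j : ℕ} (hj1 : i + 1 < j) (hj2 : d j ≠ 0) :
    DW i d = 0 := by
  rw [DW_expand, trunc_PP_zero hj1 hj2]
  ring

lemma trunc_PP {i : ℕ} {d : ℕ →₀ ℕ} {p : ℕ} (hp : p ≤ i)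
    (hgt : ∀ j, j ≠ i → j ≠ i + 1 → d j ≠ 0 → j < p) :
    truncOp (i+1) (PP i d) = ∏ j ∈ Finset.range p, X j ^ d j := by
  rw [PP, map_prod]
  have hsub : Finset.range p ⊆ ((Finset.range (BB i d)).erase i).erase (i+1) := by
    intro j hj
    have hjp := Finset.mem_range.mp hj
    exact Finset.mem_erase.mpr ⟨by omega, Finset.mem_erase.mpr ⟨by omega,
      Finset.mem_range.mpr (by have := hBB1 i d; omega)⟩⟩
  have hone : ∀ j ∈ ((Finset.range (BB i d)).erase i).erase (i+1),
      j ∉ Finset.range p → truncOp (i+1) ((X j : Pol) ^ d j) = 1 := by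
    intro j hj hjn
    have hj1 : j ≠ i := (Finset.mem_erase.mp (Finset.mem_erase.mp hj).2).1
    have hj2 : j ≠ i + 1 := (Finset.mem_erase.mp hj).1
    have hdj : d j = 0 := by
      by_contra hc
      exact hjn (Finset.mem_range.mpr (hgt j hj1 hj2 hc))
    rw [map_pow, hdj, pow_zero]
  rw [← Finset.prod_subset hsub hone]
  refine Finset.prod_congr rfl (fun j hj => ?_)
  have hjp := Finset.mem_range.mp hj
  rw [map_pow, trunc_X, if_pos (by omega)]

lemma DW_top {i : ℕ} {d : ℕ →₀ ℕ} (h1 : d i ≠ 0) (h2 : ∀ j, i < j → d j = 0) :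
    DW i d = (∏ j ∈ Finset.range i, X j ^ d j) * X i ^ (d i - 1) := by
  have hip : d (i+1) = 0 := h2 _ (by omega)
  have hm : mD i d = 0 := by simp only [mD]; omega
  have hD : DD i d = d i := by simp only [DD, mD]; omega
  have hs : sgn i d = 1 := if_pos (by omega)
  have hgt : ∀ j, j ≠ i → j ≠ i + 1 → d j ≠ 0 → j < i := by
    intro j hj1 hj2 hj3
    rcases lt_trichotomy j i with h | h | h
    · exact h
    · exact absurd h hj1
    · exact absurd (h2 j h) hj3
  rw [DW_expand, hm, hD, hs, trunc_PP (le_refl i) hgt, gsum_zero_right, if_neg h1]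
  simp

lemma DW_sub {i : ℕ} {d : ℕ →₀ ℕ} (h1 : d i = 0) (h2 : d (i+1) ≠ 0)
    (h3 : ∀ j, i + 1 < j → d j = 0) :
    DW i d = -((∏ j ∈ Finset.range i, X j ^ d j) * X i ^ (d (i+1) - 1)) := by
  have hm : mD i d = 0 := by simp only [mD]; omega
  have hD : DD i d = d (i+1) := by simp only [DD, mD]; omega
  have hs : sgn i d = -1 := if_neg (by omega)
  have hgt : ∀ j, j ≠ i → j ≠ i + 1 → d j ≠ 0 → j < i := by
    intro j hj1 hj2 hj3
    rcases lt_trichotomy j i with h | h | h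
    · exact h
    · exact absurd h hj1
    · have hij : i + 1 < j := by omega
      exact absurd (h3 j hij) hj3
  rw [DW_expand, hm, hD, hs, trunc_PP (le_refl i) hgt, gsum_zero_right, if_neg h2]
  simp


lemma Bop_neg (i : ℕ) (g : Pol) : Bop i (-g) = -Bop i g := by
  simp only [Bop_eq, map_neg, mul_neg, ← Finset.sum_neg_distrib]

lemma Bop_L (p c : ℕ) (d : ℕ →₀ ℕ) :
    Bop p ((∏ j ∈ Finset.range p, X j ^ d j) * X p ^ c)
      = ∑ k ∈ Finset.range (p+1),
          if ∀ j, k ≤ j → j < p → d j = 0 then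
            (∏ j ∈ Finset.range k, X j ^ d j) * X k ^ (c+1) else 0 := by
  rw [Bop_eq]
  refine Finset.sum_congr rfl (fun k hk => ?_)
  have hkp : k ≤ p := by have := Finset.mem_range.mp hk; omega
  have htr : truncOp (p+1) ((∏ j ∈ Finset.range p, (X j : Pol) ^ d j) * X p ^ c)
      = (∏ j ∈ Finset.range p, (X j : Pol) ^ d j) * X p ^ c := by
    rw [map_mul, map_prod, map_pow, trunc_X, if_pos (by omega)]
    congr 1
    refine Finset.prod_congr rfl (fun j hj => ?_)
    have := Finset.mem_range.mp hj
    rw [map_pow, trunc_X, if_pos (by omega)]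
  rw [htr, map_mul, map_prod, map_pow]
  have hbp : aeval (bsub k (p-k)) (X p : Pol) = X k := by
    rw [aeval_X, bsub, if_neg (by omega), if_neg (by omega)]
    congr 1
    omega
  rw [hbp]
  have hsplit : (∏ j ∈ Finset.range p, aeval (bsub k (p-k)) ((X j : Pol) ^ d j))
      = (∏ j ∈ Finset.range k, (X j : Pol) ^ d j) *
        ∏ j ∈ Finset.Ico k p, (0 : Pol) ^ d j := by
    rw [Finset.range_eq_Ico, ← Finset.prod_Ico_consecutive _ (Nat.zero_le k) hkp,
      ← Finset.range_eq_Ico]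
    congr 1
    · refine Finset.prod_congr rfl (fun j hj => ?_)
      have := Finset.mem_range.mp hj
      rw [map_pow, aeval_X, bsub, if_pos (by omega)]
    · refine Finset.prod_congr rfl (fun j hj => ?_)
      have := Finset.mem_Ico.mp hj
      rw [map_pow, aeval_X, bsub, if_neg (by omega), if_pos (by omega)]
  rw [hsplit]
  by_cases hall : ∀ j, k ≤ j → j < p → d j = 0
  · rw [if_pos hall]
    have : (∏ j ∈ Finset.Ico k p, (0:Pol) ^ d j) = 1 := by
      refine Finset.prod_eq_one (fun j hj => ?_)
      have := Finset.mem_Ico.mp hj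
      rw [hall j (by omega) (by omega), pow_zero]
    rw [this, mul_one, pow_succ]
    ring
  · rw [if_neg hall]
    push_neg at hall
    obtain ⟨j, hj1, hj2, hj3⟩ := hall
    have : (∏ j ∈ Finset.Ico k p, (0:Pol) ^ d j) = 0 := by
      refine Finset.prod_eq_zero (Finset.mem_Ico.mpr ⟨hj1, hj2⟩) ?_
      rw [zero_pow hj3]
    rw [this]
    ring


lemma key_lemma (d : ℕ →₀ ℕ) (hd : d ≠ 0) (N : ℕ) (hN : ∀ j, d j ≠ 0 → j < N) :
    ∑ i ∈ Finset.range N, Bop i (DW i d) = monomial d (1:ℤ) := by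
  have hne : d.support.Nonempty := Finsupp.support_nonempty_iff.mpr hd
  set n := d.support.max' hne with hn_def
  have hn : d n ≠ 0 := Finsupp.mem_support_iff.mp (d.support.max'_mem hne)
  have htop : ∀ j, n < j → d j = 0 := by
    intro j hj
    by_contra hc
    exact absurd (Finset.le_max' _ _ (Finsupp.mem_support_iff.mpr hc)) (by omega)
  have hnN : n < N := hN n hn
  clear_value n
  have hzero : ∀ i ∈ Finset.range N, i ∉ ({n-1, n} : Finset ℕ) → Bop i (DW i d) = 0 := by
    intro i _ hi
    simp only [Finset.mem_insert, Finset.mem_singleton] at hi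
    push_neg at hi
    rcases lt_trichotomy i n with h | h | h
    · have h2 : i + 1 < n := by omega
      rw [DW_mid h2 hn, Bop_zero]
    · exact absurd h hi.2
    · rw [DW_diag (by rw [htop i h, htop (i+1) (by omega)]), Bop_zero]
  have hsum : ∑ i ∈ Finset.range N, Bop i (DW i d)
      = ∑ i ∈ ({n-1, n} : Finset ℕ), Bop i (DW i d) := by
    refine (Finset.sum_subset ?_ hzero).symm
    intro i hi
    simp only [Finset.mem_insert, Finset.mem_singleton] at hi
    rcases hi with h | h <;> exact Finset.mem_range.mpr (by omega)
  rw [hsum]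
  have hmono : monomial d (1:ℤ) = (∏ j ∈ Finset.range n, X j ^ d j) * X n ^ d n := by
    rw [mono_eq_prod (B := n+1) (fun j hj => by
      by_contra hc; exact absurd (htop j (by omega)) hj), Finset.prod_range_succ]
  rcases Nat.eq_zero_or_pos n with hn0 | hnpos
  · subst hn0
    simp only [Nat.zero_sub, Finset.insert_eq_self.mpr (Finset.mem_singleton.mpr rfl),
      Finset.sum_singleton] at *
    rw [DW_top hn htop, Bop_L]
    rw [Finset.sum_range_one, if_pos (by intro j h1 h2; omega)]
    rw [hmono, show d 0 - 1 + 1 = d 0 by omega]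
  · have hpair : ({n-1, n} : Finset ℕ) = {n-1} ∪ {n} := rfl
    have hd1 : n - 1 + 1 = n := by omega
    rw [Finset.sum_pair (by omega : n - 1 ≠ n)]
    have htn : Bop n (DW n d) = ∑ k ∈ Finset.range (n+1),
        if ∀ j, k ≤ j → j < n → d j = 0 then
          (∏ j ∈ Finset.range k, X j ^ d j) * X k ^ d n else 0 := by
      rw [DW_top hn htop, Bop_L]
      simp only [show d n - 1 + 1 = d n by omega]
    by_cases hdn1 : d (n-1) = 0
    · have htn1 : Bop (n-1) (DW (n-1) d)
          = -∑ k ∈ Finset.range n,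
              if ∀ j, k ≤ j → j < n - 1 → d j = 0 then
                (∏ j ∈ Finset.range k, X j ^ d j) * X k ^ d n else 0 := by
        have hsubs : DW (n-1) d = -((∏ j ∈ Finset.range (n-1), X j ^ d j) *
            X (n-1) ^ (d ((n-1)+1) - 1)) := by
          refine DW_sub hdn1 (by rw [hd1]; exact hn) (fun j hj => htop j (by omega))
        rw [hsubs, Bop_neg, Bop_L]
        rw [hd1]
        simp only [show d n - 1 + 1 = d n by omega]
      rw [htn, htn1, Finset.sum_range_succ]
      have hiff : ∀ k, k < n →
          ((∀ j, k ≤ j → j < n → d j = 0) ↔ (∀ j, k ≤ j → j < n - 1 → d j = 0)) := by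
        intro k _
        constructor
        · intro h j h1 h2; exact h j h1 (by omega)
        · intro h j h1 h2
          by_cases hj : j = n - 1
          · rw [hj]; exact hdn1
          · exact h j h1 (by omega)
      have hcongr : ∑ k ∈ Finset.range n,
          (if ∀ j, k ≤ j → j < n → d j = 0 then
            (∏ j ∈ Finset.range k, (X j : Pol) ^ d j) * X k ^ d n else 0)
          = ∑ k ∈ Finset.range n,
          (if ∀ j, k ≤ j → j < n - 1 → d j = 0 then
            (∏ j ∈ Finset.range k, (X j : Pol) ^ d j) * X k ^ d n else 0) := by
        refine Finset.sum_congr rfl (fun k hk => ?_)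
        rw [if_congr (hiff k (Finset.mem_range.mp hk)) rfl rfl]
      rw [hcongr, if_pos (by intro j h1 h2; omega), hmono]
      ring
    · have htn1 : Bop (n-1) (DW (n-1) d) = 0 := by
        by_cases heq : d (n-1) = d n
        · rw [DW_diag (by rw [hd1]; exact heq), Bop_zero]
        · rw [DW_min hdn1 (by rw [hd1]; exact hn), Bop_zero]
      rw [htn, htn1, zero_add]
      rw [Finset.sum_eq_single n]
      · rw [if_pos (by intro j h1 h2; omega), hmono]
      · intro k hk hkn
        have hklt : k < n := by have := Finset.mem_range.mp hk; omega
        rw [if_neg]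
        intro hall
        exact hdn1 (hall (n-1) (by omega) (by omega))
      · intro hnmem
        exact absurd (Finset.mem_range.mpr (by omega)) hnmem
    

end StmtTen

/-- for every `f` with no constant term, `Σ_{i≥1} B_i(D_i f) = f`:
the slide creators are creation operators for the slide extractors. -/
theorem stmt_10 (f : Pol) (hf : constantCoeff f = 0) :
    {i : ℕ | Bop i (Dop i f) ≠ 0}.Finite ∧
    ∑ᶠ i : ℕ, Bop i (Dop i f) = f := by
  set N := f.support.sup (fun d => d.support.sup id) + 1 with hN_def
  have hbig : ∀ d ∈ f.support, ∀ j : ℕ, d j ≠ 0 → j < N := by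
    intro d hd j hj
    have h1 : j ≤ d.support.sup id := Finset.le_sup (f := id) (Finsupp.mem_support_iff.mpr hj)
    have h2 : d.support.sup id ≤ f.support.sup (fun d => d.support.sup id) :=
      Finset.le_sup (f := fun d => d.support.sup id) hd
    omega
  have hterm : ∀ i : ℕ, Bop i (Dop i f)
      = ∑ d ∈ f.support, C (f.coeff d) * Bop i (DW i d) := by
    intro i
    rw [Dop_apply, Bop_Csum]
  have hvanish : ∀ i : ℕ, N ≤ i → Bop i (Dop i f) = 0 := by
    intro i hi
    rw [hterm i]
    refine Finset.sum_eq_zero (fun d hd => ?_)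
    have h1 : d i = 0 := by
      by_contra hc; exact absurd (hbig d hd i hc) (by omega)
    have h2 : d (i+1) = 0 := by
      by_contra hc; exact absurd (hbig d hd (i+1) hc) (by omega)
    rw [DW_diag (h1.trans h2.symm), Bop_zero, mul_zero]
  have hsupp : (Function.support fun i => Bop i (Dop i f)) ⊆ ↑(Finset.range N) := by
    intro i hi
    simp only [Function.mem_support] at hi
    by_contra hc
    refine hi (hvanish i ?_)
    simp only [Finset.coe_range, Set.mem_Iio] at hc
    omega
  constructor
  · exact Set.Finite.subset (Finset.range N).finite_toSet hsupp
  · rw [finsum_eq_finset_sum_of_support_subset _ hsupp]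
    have step1 : ∑ i ∈ Finset.range N, Bop i (Dop i f)
        = ∑ d ∈ f.support, C (f.coeff d) * ∑ i ∈ Finset.range N, Bop i (DW i d) := by
      rw [Finset.sum_congr rfl (fun i _ => hterm i), Finset.sum_comm]
      exact Finset.sum_congr rfl (fun d _ => by rw [Finset.mul_sum])
    rw [step1]
    have step2 : ∀ d ∈ f.support,
        C (f.coeff d) * ∑ i ∈ Finset.range N, Bop i (DW i d)
          = C (f.coeff d) * monomial d 1 := by
      intro d hd
      have hd0 : d ≠ 0 := by
        intro h
        subst h
        rw [MvPolynomial.mem_support_iff] at hd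
        exact hd (by rw [MvPolynomial.constantCoeff_eq] at hf; exact hf)
      rw [key_lemma d hd0 N (hbig d hd)]
    rw [Finset.sum_congr rfl step2]
    conv_rhs => rw [(f.support_sum_monomial_coeff).symm]
    exact Finset.sum_congr rfl (fun d _ => by rw [C_mul_monomial, mul_one])
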